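/- Let v be a nonnegative integrable random variable on a probability space with P(v > x) > 0 for all x ≥ 0, and let F̄(x) = P(v > x). If F̄ is rapidly varying with index −∞, then the function G defined by G(x) = ∫_x^∞ F̄(y) dy satisfies 0 < G(x) < ∞ for every x ≥ 0, and G is rapidly varying with index −∞, i.e., for every t > 1, lim_{x→∞} G(tx)/G(x) = 0. -/

import Mathlib

open MeasureTheory Filter Set

/-- Let `v` be a nonnegative integrable random variable with `P(v > x) > 0` for all `x ≥ 0`,
and let `F̄ x = P(v > x)`.  If `F̄` is rapidly varying with index `-∞`, then
`G x = ∫_x^∞ F̄ y dy` satisfies `0 < G x < ∞` for every `x ≥ 0`, and `G` is rapidly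
varying with index `-∞`. -/
theorem stmt0 {Ω : Type*} [MeasurableSpace Ω] (μ : Measure Ω) [IsProbabilityMeasure μ]
    (v : Ω → ℝ) (hvm : Measurable v) (hv : Integrable v μ) (hv0 : ∀ ω, 0 ≤ v ω)
    (Fbar : ℝ → ℝ) (hFbar : ∀ x, Fbar x = (μ {ω | x < v ω}).toReal)
    (hpos : ∀ x : ℝ, 0 ≤ x → 0 < Fbar x)
    (hrv : ∀ t : ℝ, 1 < t → Tendsto (fun x => Fbar (t * x) / Fbar x) atTop (nhds 0))
    (G : ℝ → ℝ) (hG : ∀ x, G x = ∫ y in Set.Ioi x, Fbar y) :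
    (∀ x : ℝ, 0 ≤ x → (0 < G x ∧ IntegrableOn Fbar (Set.Ioi x) volume)) ∧
      (∀ t : ℝ, 1 < t → Tendsto (fun x => G (t * x) / G x) atTop (nhds 0)) := by
  have hne : ∀ x : ℝ, μ {ω | x < v ω} ≠ ⊤ := fun x => measure_ne_top μ _
  have hFnn : ∀ x, 0 ≤ Fbar x := fun x => by rw [hFbar]; exact ENNReal.toReal_nonneg
  have hanti : Antitone Fbar := by
    intro a b hab
    rw [hFbar, hFbar]
    exact ENNReal.toReal_le_toReal (hne _) (hne _) |>.mpr
      (measure_mono fun ω h => lt_of_le_of_lt hab h)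
  have hmble : Measurable Fbar := hanti.measurable
  have hofReal : ∀ y : ℝ, ENNReal.ofReal (Fbar y) = μ {ω | y < v ω} := by
    intro y; rw [hFbar, ENNReal.ofReal_toReal (hne y)]
  -- finiteness of the lintegral over `Ioi 0`
  have hlint : ∫⁻ y in Ioi (0 : ℝ), ENNReal.ofReal (Fbar y) < ⊤ := by
    have h1 : ∫⁻ y in Ioi (0 : ℝ), ENNReal.ofReal (Fbar y)
        = ∫⁻ y in Ioi (0 : ℝ), μ {ω | y < v ω} := by
      apply lintegral_congr fun y => hofReal y
    rw [h1, ← lintegral_eq_lintegral_meas_lt μ (ae_of_all _ hv0) hvm.aemeasurable]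
    rw [← hasFiniteIntegral_iff_ofReal (ae_of_all _ hv0)]
    exact hv.hasFiniteIntegral
  -- integrability on `Ioi x` for `x ≥ 0`
  have hint : ∀ x : ℝ, 0 ≤ x → IntegrableOn Fbar (Ioi x) volume := by
    intro x hx
    refine ⟨hmble.aestronglyMeasurable.restrict, ?_⟩
    rw [hasFiniteIntegral_iff_ofReal (ae_of_all _ fun y => hFnn y)]
    exact lt_of_le_of_lt (lintegral_mono_set (Ioi_subset_Ioi hx)) hlint
  -- G is nonnegative everywhere
  have hGnn : ∀ x : ℝ, 0 ≤ G x := by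
    intro x
    rw [hG]
    exact setIntegral_nonneg measurableSet_Ioi fun y _ => hFnn y
  -- G is positive for x ≥ 0
  have hGpos : ∀ x : ℝ, 0 ≤ x → 0 < G x := by
    intro x hx
    rw [hG]
    have hsub : Ioc x (x + 1) ⊆ Ioi x := Ioc_subset_Ioi_self
    have hIc : IntegrableOn Fbar (Ioc x (x + 1)) volume := (hint x hx).mono_set hsub
    have h1 : Fbar (x + 1) * 1 ≤ ∫ y in Ioc x (x + 1), Fbar y := by
      have : ∫ _ in Ioc x (x + 1), Fbar (x + 1) ≤ ∫ y in Ioc x (x + 1), Fbar y := by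
        apply setIntegral_mono_on (integrableOn_const (by simp) (by simp)) hIc
          measurableSet_Ioc
        intro y hy
        exact hanti hy.2
      simpa [Real.volume_Ioc] using this
    have h2 : ∫ y in Ioc x (x + 1), Fbar y ≤ ∫ y in Ioi x, Fbar y := by
      apply setIntegral_mono_set (hint x hx) (ae_of_all _ fun y => hFnn y)
        (HasSubset.Subset.eventuallyLE hsub)
    have h3 : 0 < Fbar (x + 1) := hpos (x + 1) (by linarith)
    nlinarith
  refine ⟨fun x hx => ⟨hGpos x hx, hint x hx⟩, ?_⟩
  intro t ht
  have ht0 : 0 < t := by linarith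
  -- substitution formula
  have key : ∀ x : ℝ, G (t * x) = t * ∫ y in Ioi x, Fbar (t * y) := by
    intro x
    rw [hG, integral_comp_mul_left_Ioi Fbar x ht0, smul_eq_mul]
    field_simp
  rw [NormedAddCommGroup.tendsto_nhds_zero]
  intro ε hε
  have hε' : 0 < ε / (2 * t) := by positivity
  have hev : ∀ᶠ y in atTop, Fbar (t * y) / Fbar y < ε / (2 * t) :=
    (hrv t ht).eventually (Filter.Tendsto.eventually_lt_const hε' tendsto_id)
  rw [eventually_atTop] at hev
  obtain ⟨X, hX⟩ := hev
  rw [eventually_atTop]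
  refine ⟨max X 0, fun x hx => ?_⟩
  have hx0 : 0 ≤ x := le_trans (le_max_right X 0) hx
  have hxX : X ≤ x := le_trans (le_max_left X 0) hx
  have hbound : ∀ y ∈ Ioi x, Fbar (t * y) ≤ ε / (2 * t) * Fbar y := by
    intro y hy
    have hy0 : 0 ≤ y := le_trans hx0 (le_of_lt hy)
    have hFy : 0 < Fbar y := hpos y hy0
    have := hX y (le_trans hxX (le_of_lt hy))
    rw [div_lt_iff₀ hFy] at this
    linarith
  have hintc : IntegrableOn (fun y => Fbar (t * y)) (Ioi x) volume := by
    rw [integrableOn_Ioi_comp_mul_left_iff Fbar x ht0]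
    exact hint (t * x) (by positivity)
  have hle : ∫ y in Ioi x, Fbar (t * y) ≤ ε / (2 * t) * G x := by
    have : ∫ y in Ioi x, Fbar (t * y) ≤ ∫ y in Ioi x, ε / (2 * t) * Fbar y := by
      apply setIntegral_mono_on hintc ((hint x hx0).const_mul _) measurableSet_Ioi hbound
    rw [hG, ← integral_const_mul] at *
    exact this
  have hGtx : G (t * x) ≤ (ε / 2) * G x := by
    rw [key x]
    calc t * ∫ y in Ioi x, Fbar (t * y) ≤ t * (ε / (2 * t) * G x) := by
          apply mul_le_mul_of_nonneg_left hle (le_of_lt ht0)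
      _ = (ε / 2) * G x := by field_simp
  have hGx : 0 < G x := hGpos x hx0
  rw [Real.norm_eq_abs, abs_of_nonneg (div_nonneg (hGnn _) (hGnn _))]
  rw [div_lt_iff₀ hGx]
  nlinarith
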